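/- Let G be a locally compact Hausdorff topological group, E a Hausdorff locally convex real topological vector space, and π a representation of G on E by continuous linear automorphisms such that for every compact subset K ⊆ G the family of operators {π(g) : g ∈ K} is equicontinuous (a locally equicontinuous G-module). Then the set 𝒞E := {ξ ∈ E : the orbit map g ↦ π(g)ξ is continuous} is a closed ℝ-linear subspace of E, invariant under π(g) for every g ∈ G, and the action map G × 𝒞E → 𝒞E, (g, ξ) ↦ π(g)ξ, is continuous when 𝒞E carries the subspace topology. -/

import Mathlib

open Filter Topology

/-- Continuous vectors of a locally equicontinuous module: for a representation `π` of a
locally compact Hausdorff group `G` on a Hausdorff locally convex real topological vector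
space `E` by continuous linear automorphisms which is equicontinuous on every compact
subset of `G`, the set `𝒞E` of vectors with continuous orbit map is a closed, invariant,
`ℝ`-linear subspace of `E`, and the action map `G × 𝒞E → 𝒞E` is continuous (with `𝒞E`
carrying the subspace topology). -/
theorem stmt17 {G : Type*} [Group G] [TopologicalSpace G] [IsTopologicalGroup G]
    [LocallyCompactSpace G] [T2Space G]
    {E : Type*} [AddCommGroup E] [Module ℝ E] [TopologicalSpace E]
    [IsTopologicalAddGroup E] [ContinuousSMul ℝ E] [T2Space E] [LocallyConvexSpace ℝ E]
    (π : G →* (E ≃L[ℝ] E))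
    (heq : ∀ K : Set G, IsCompact K → ∀ V ∈ nhds (0 : E), ∃ U ∈ nhds (0 : E),
      ∀ g ∈ K, ∀ x ∈ U, π g x ∈ V) :
    IsClosed {ξ : E | Continuous fun g : G => π g ξ} ∧
    (∃ S : Submodule ℝ E, (S : Set E) = {ξ : E | Continuous fun g : G => π g ξ}) ∧
    (∀ g : G, ∀ ξ : E, (Continuous fun g' : G => π g' ξ) →
      Continuous fun g' : G => π g' (π g ξ)) ∧
    Continuous (fun p : G × {ξ : E | Continuous fun g : G => π g ξ} =>
      π p.1 (p.2 : E)) := by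
  set C : Set E := {ξ : E | Continuous fun g : G => π g ξ} with hC
  refine ⟨?_, ?_, ?_, ?_⟩
  · -- closedness
    refine isClosed_of_closure_subset fun ξ hξ => ?_
    refine continuous_iff_continuousAt.2 fun g₀ => ?_
    rw [ContinuousAt, ← tendsto_sub_nhds_zero_iff]
    rw [(𝓝 (0 : E)).basis_sets.tendsto_right_iff]
    intro V hV
    obtain ⟨W1, hW1, hW1s⟩ := exists_nhds_zero_half hV
    obtain ⟨W2, hW2, hW2s⟩ := exists_nhds_zero_half hW1
    set W := W1 ∩ W2 with hWdef
    have hW : W ∈ 𝓝 (0 : E) := inter_mem hW1 hW2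
    obtain ⟨K, hKc, hKn⟩ := exists_compact_mem_nhds g₀
    obtain ⟨U, hU, hUs⟩ := heq K hKc W hW
    have hUsym : U ∩ (-U) ∈ 𝓝 (0 : E) := inter_mem hU (neg_mem_nhds_zero E hU)
    -- find ξ' ∈ C with ξ' - ξ ∈ U ∩ -U
    have hnbd : {x : E | x - ξ ∈ U ∩ (-U)} ∈ 𝓝 ξ := by
      have ht : Tendsto (fun x : E => x - ξ) (𝓝 ξ) (𝓝 0) := by
        simpa using (continuous_sub_right ξ).tendsto ξ
      exact ht hUsym
    obtain ⟨ξ', hξ'U, hξ'C⟩ := (mem_closure_iff_nhds.1 hξ) _ hnbd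
    have hξ'1 : ξ' - ξ ∈ U := hξ'U.1
    have hξ'2 : ξ - ξ' ∈ U := by
      have := hξ'U.2
      simpa [neg_sub] using this
    have horb : ∀ᶠ g in 𝓝 g₀, π g ξ' - π g₀ ξ' ∈ W := by
      have h1 : Tendsto (fun g => π g ξ' - π g₀ ξ') (𝓝 g₀) (𝓝 0) :=
        tendsto_sub_nhds_zero_iff.2 (hξ'C.tendsto g₀)
      exact h1 hW
    have hgK : ∀ᶠ g in 𝓝 g₀, g ∈ K := hKn
    have hg₀K : g₀ ∈ K := mem_of_mem_nhds hKn
    filter_upwards [horb, hgK] with g h1 h2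
    have e1 : π g (ξ - ξ') ∈ W := hUs g h2 _ hξ'2
    have e2 : π g₀ (ξ' - ξ) ∈ W := hUs g₀ hg₀K _ hξ'1
    have key : π g ξ - π g₀ ξ =
        (π g (ξ - ξ') + (π g ξ' - π g₀ ξ')) + π g₀ (ξ' - ξ) := by
      simp only [map_sub]
      abel
    rw [key]
    exact hW1s _ (hW2s _ e1.2 _ h1.2) _ e2.1
  · -- submodule
    refine ⟨{ carrier := C
              add_mem' := ?_
              zero_mem' := ?_
              smul_mem' := ?_ }, rfl⟩
    · intro a b ha hb
      have : (fun g : G => π g (a + b)) = fun g => π g a + π g b := by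
        funext g; simp
      simpa [hC, Set.mem_setOf_eq, this] using ((ha.add hb).congr fun _ => rfl : Continuous fun g => π g a + π g b)
    · have : (fun g : G => π g (0 : E)) = fun _ => (0 : E) := by funext g; simp
      simpa [hC, Set.mem_setOf_eq, this] using continuous_const
    · intro c x hx
      have : (fun g : G => π g (c • x)) = fun g => c • π g x := by
        funext g; simp
      simpa [hC, Set.mem_setOf_eq, this] using ((continuous_const.smul hx).congr fun _ => rfl : Continuous fun g => c • π g x)
  · -- invariance
    intro g ξ hξ
    have : (fun g' : G => π g' (π g ξ)) = (fun g' : G => π g' ξ) ∘ (· * g) := by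
      funext g'
      simp only [Function.comp, map_mul]
      rfl
    rw [this]
    exact hξ.comp (continuous_mul_right g)
  · -- joint continuity
    refine continuous_iff_continuousAt.2 fun p₀ => ?_
    obtain ⟨g₀, ξ₀⟩ := p₀
    rw [ContinuousAt, ← tendsto_sub_nhds_zero_iff]
    rw [(𝓝 (0 : E)).basis_sets.tendsto_right_iff]
    intro V hV
    obtain ⟨W, hW, hWs⟩ := exists_nhds_zero_half hV
    obtain ⟨K, hKc, hKn⟩ := exists_compact_mem_nhds g₀
    obtain ⟨U, hU, hUs⟩ := heq K hKc W hW
    have h1 : ∀ᶠ p : G × C in 𝓝 (g₀, ξ₀), p.1 ∈ K :=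
      continuous_fst.continuousAt (x := (g₀, ξ₀)) hKn
    have hcoe : Continuous fun p : G × C => (p.2 : E) - (ξ₀ : E) :=
      (continuous_subtype_val.comp continuous_snd).sub continuous_const
    have h2 : ∀ᶠ p : G × C in 𝓝 (g₀, ξ₀), (p.2 : E) - (ξ₀ : E) ∈ U := by
      have ht : Tendsto (fun p : G × C => (p.2 : E) - (ξ₀ : E)) (𝓝 (g₀, ξ₀)) (𝓝 0) := by
        simpa using hcoe.tendsto (g₀, ξ₀)
      exact ht hU
    have h3 : ∀ᶠ p : G × C in 𝓝 (g₀, ξ₀), π p.1 (ξ₀ : E) - π g₀ (ξ₀ : E) ∈ W := by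
      have hcont : Continuous fun p : G × C => π p.1 (ξ₀ : E) - π g₀ (ξ₀ : E) :=
        (ξ₀.2.comp continuous_fst).sub continuous_const
      have ht : Tendsto (fun p : G × C => π p.1 (ξ₀ : E) - π g₀ (ξ₀ : E))
          (𝓝 (g₀, ξ₀)) (𝓝 0) := by
        simpa using hcont.tendsto (g₀, ξ₀)
      exact ht hW
    filter_upwards [h1, h2, h3] with p hp1 hp2 hp3
    have e1 : π p.1 ((p.2 : E) - (ξ₀ : E)) ∈ W := hUs p.1 hp1 _ hp2
    have key : π p.1 (p.2 : E) - π g₀ (ξ₀ : E) =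
        π p.1 ((p.2 : E) - (ξ₀ : E)) + (π p.1 (ξ₀ : E) - π g₀ (ξ₀ : E)) := by
      simp only [map_sub]
      abel
    rw [key]
    exact hWs _ e1 _ hp3
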